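/- Let q be a prime power, let G ∈ F_q^{k×n} be a matrix of rank k with columns g_1,…,g_n, and let s_1, s_2 ≥ 1 with s_1 + s_2 = k. Then s_1/E_1(G) + s_2/E_2(G) ≤ 2 − (N(F_1) + N(F_2))/n, where N(F_i) is the number of columns of G contained in F_i. -/

import Mathlib

open Finset

/-- The `r`-th harmonic number `H_r = ∑_{i=1}^r 1/i`, as a real number (`H_0 = 0`). -/
noncomputable def harm (r : ℕ) : ℝ := ∑ i ∈ Finset.range r, (1 : ℝ) / (i + 1)

/-- The span of the columns of `G` indexed by the subset `S ⊆ {1,…,n}`. -/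
noncomputable def colSpan (F : Type*) [Field F] {k n : ℕ}
    (G : Matrix (Fin k) (Fin n) F) (S : Finset (Fin n)) : Submodule F (Fin k → F) :=
  Submodule.span F ((fun j => fun i => G i j) '' (S : Set (Fin n)))

/-- `α_V(s)`: the number of `s`-element subsets `S ⊆ {1,…,n}` whose columns span a
subspace containing the target subspace `V`. -/
noncomputable def alphaCount (F : Type*) [Field F] {k n : ℕ}
    (G : Matrix (Fin k) (Fin n) F) (V : Submodule F (Fin k → F)) (s : ℕ) : ℕ :=
  Nat.card {S : Finset (Fin n) // S.card = s ∧ V ≤ colSpan F G S}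

/-- The first file subspace `F₁ = span(e_1, …, e_{s₁}) ⊆ F_q^k`. -/
noncomputable def file1 (F : Type*) [Field F] (k s1 : ℕ) : Submodule F (Fin k → F) :=
  Submodule.span F {v : Fin k → F | ∃ i : Fin k, (i : ℕ) < s1 ∧ v = Pi.single i 1}

/-- The second file subspace `F₂ = span(e_{s₁+1}, …, e_k) ⊆ F_q^k`. -/
noncomputable def file2 (F : Type*) [Field F] (k s1 : ℕ) : Submodule F (Fin k → F) :=
  Submodule.span F {v : Fin k → F | ∃ i : Fin k, s1 ≤ (i : ℕ) ∧ v = Pi.single i 1}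

/-- The expected retrieval time `E(G, V) = n·H_n − ∑_{s=1}^{n−1} α_V(s)/C(n−1,s)`. -/
noncomputable def Etime (F : Type*) [Field F] {k n : ℕ}
    (G : Matrix (Fin k) (Fin n) F) (V : Submodule F (Fin k → F)) : ℝ :=
  (n : ℝ) * harm n -
    ∑ s ∈ Finset.Icc 1 (n - 1), (alphaCount F G V s : ℝ) / ((n - 1).choose s : ℝ)

/-- `N(W)`: the number of columns of `G` contained in the subspace `W`. -/
noncomputable def Ncount (F : Type*) [Field F] {k n : ℕ}
    (G : Matrix (Fin k) (Fin n) F) (W : Submodule F (Fin k → F)) : ℕ :=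
  Nat.card {j : Fin n // (fun i => G i j) ∈ W}


section
variable {n : ℕ}

lemma card_filter_product {X Y : Type*} [DecidableEq X] [DecidableEq Y]
    (A : Finset X) (B : Finset Y) (P : X → Prop) (Q : X → Y → Prop)
    [DecidablePred P] [∀ x, DecidablePred (Q x)] :
    ((A ×ˢ B).filter fun p => P p.1 ∧ Q p.1 p.2).card
      = ∑ x ∈ A.filter P, (B.filter (Q x)).card := by
  rw [Finset.card_filter, Finset.sum_product, Finset.sum_filter]
  refine Finset.sum_congr rfl fun x hx => ?_
  by_cases h : P x
  · simp only [h, true_and, if_true, Finset.card_filter]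
  · simp only [h, false_and, if_false, Finset.sum_const_zero]

lemma count_pairs (s : ℕ) (P : Finset (Fin n) → Prop) [DecidablePred P]
    (Q : Finset (Fin n) → Fin n → Prop) [∀ S, DecidablePred (Q S)] (w : ℕ)
    (hw : ∀ S ∈ powersetCard s (univ : Finset (Fin n)), P S → (univ.filter (Q S)).card = w) :
    (((powersetCard s (univ : Finset (Fin n))) ×ˢ univ).filter fun p => P p.1 ∧ Q p.1 p.2).card
      = ((powersetCard s (univ : Finset (Fin n))).filter P).card * w := by
  rw [card_filter_product]
  rw [Finset.sum_congr rfl (fun S hS => hw S (mem_filter.mp hS).1 (mem_filter.mp hS).2)]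
  rw [Finset.sum_const, smul_eq_mul]

end

lemma filter_lt_card_eq_sum {X : Type*} [DecidableEq X] (A : Finset X) (f : X → ℕ) (d : ℕ) :
    (A.filter fun x => f x < d).card = ∑ u ∈ range d, (A.filter fun x => f x = u).card := by
  rw [Finset.card_eq_sum_card_fiberwise (f := f) (t := range d)
    (fun x hx => mem_range.mpr (mem_filter.mp hx).2)]
  refine Finset.sum_congr rfl fun u hu => ?_
  rw [Finset.filter_filter]
  congr 1
  apply Finset.filter_congr
  intro x _
  simp only [mem_range] at hu
  constructor
  · tauto
  · intro h; exact ⟨by omega, h⟩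

lemma pair_bij (n s : ℕ) (Pr : Finset (Fin n) → Fin n → Prop) [∀ S j, Decidable (Pr S j)] :
    (((powersetCard s (univ : Finset (Fin n))) ×ˢ univ).filter
        fun p => p.2 ∉ p.1 ∧ Pr p.1 p.2).card
    = (((powersetCard (s+1) (univ : Finset (Fin n))) ×ˢ univ).filter
        fun p => p.2 ∈ p.1 ∧ Pr (p.1.erase p.2) p.2).card := by
  apply Finset.card_bij (fun p _ => (insert p.2 p.1, p.2))
  · rintro ⟨S, j⟩ hp
    simp only [mem_filter, mem_product, mem_powersetCard_univ] at hp ⊢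
    obtain ⟨⟨hS, -⟩, hj, hPr⟩ := hp
    refine ⟨⟨by rw [card_insert_of_notMem hj, hS], mem_univ _⟩, mem_insert_self _ _, ?_⟩
    rwa [Finset.erase_insert hj]
  · rintro ⟨S, j⟩ hp ⟨S', j'⟩ hp' h
    simp only [mem_filter, mem_product] at hp hp'
    obtain ⟨-, hj, -⟩ := hp
    obtain ⟨-, hj', -⟩ := hp'
    simp only [Prod.mk.injEq] at h
    obtain ⟨h1, rfl⟩ := h
    have : (insert j S).erase j = (insert j S').erase j := by rw [h1]
    rw [Finset.erase_insert hj, Finset.erase_insert hj'] at this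
    exact Prod.ext this rfl
  · rintro ⟨S, j⟩ hp
    simp only [mem_filter, mem_product, mem_powersetCard_univ] at hp
    obtain ⟨⟨hS, -⟩, hj, hPr⟩ := hp
    refine ⟨(S.erase j, j), ?_, ?_⟩
    · simp only [mem_filter, mem_product, mem_powersetCard_univ]
      exact ⟨⟨by rw [Finset.card_erase_of_mem hj, hS]; rfl, mem_univ _⟩,
        Finset.notMem_erase _ _, hPr⟩
    · simp [Finset.insert_erase hj]


lemma erase_inter {n : ℕ} (S M : Finset (Fin n)) (j : Fin n) :
    S.erase j ∩ M = (S ∩ M).erase j := by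
  ext x
  simp only [Finset.mem_erase, Finset.mem_inter]
  tauto

/-- `cnt n M u s` = number of `s`-subsets `S` with `|S ∩ M| = u`. -/
def cnt (n : ℕ) (M : Finset (Fin n)) (u s : ℕ) : ℕ :=
  ((powersetCard s (univ : Finset (Fin n))).filter fun S => (S ∩ M).card = u).card

lemma sum_cnt_eq (n : ℕ) (M : Finset (Fin n)) (d s : ℕ) :
    ∑ u ∈ range d, cnt n M u s
      = ((powersetCard s (univ : Finset (Fin n))).filter fun S => (S ∩ M).card < d).card :=
  (filter_lt_card_eq_sum _ _ _).symm

lemma star (n : ℕ) (M : Finset (Fin n)) (t s : ℕ) (hs : s < n) (ht : t < M.card) :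
    (∑ u ∈ range (t+1), cnt n M u (s+1)) * (s+1) + cnt n M t s * (M.card - t)
      = (∑ u ∈ range (t+1), cnt n M u s) * (n - s) := by
  classical
  -- left pieces
  have hQ1 : (∑ u ∈ range (t+1), cnt n M u (s+1)) * (s+1)
      = (((powersetCard (s+1) (univ : Finset (Fin n))) ×ˢ univ).filter
          fun p => (p.1 ∩ M).card < t+1 ∧ p.2 ∈ p.1).card := by
    rw [sum_cnt_eq, (count_pairs (s+1) (fun S => (S ∩ M).card < t+1) (fun S j => j ∈ S) (s+1) ?_)]
    intro S hS _
    rw [mem_powersetCard_univ] at hS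
    rw [Finset.filter_mem_eq_inter, Finset.univ_inter, hS]
  have hQ2 : cnt n M t s * (M.card - t)
      = (((powersetCard (s+1) (univ : Finset (Fin n))) ×ˢ univ).filter
          fun p => (p.1 ∩ M).card = t+1 ∧ (p.2 ∈ M ∧ p.2 ∈ p.1)).card := by
    have b2 := pair_bij n s (fun S j => (S ∩ M).card = t ∧ j ∈ M)
    have e1 : (((powersetCard s (univ : Finset (Fin n))) ×ˢ univ).filter
          fun p => p.2 ∉ p.1 ∧ ((p.1 ∩ M).card = t ∧ p.2 ∈ M)).card
        = (((powersetCard s (univ : Finset (Fin n))) ×ˢ univ).filter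
          fun p => (p.1 ∩ M).card = t ∧ (p.2 ∈ M ∧ p.2 ∉ p.1)).card := by
      congr 1; apply Finset.filter_congr; intro x _; tauto
    have e2 : (((powersetCard (s+1) (univ : Finset (Fin n))) ×ˢ univ).filter
          fun p => p.2 ∈ p.1 ∧ ((p.1.erase p.2 ∩ M).card = t ∧ p.2 ∈ M)).card
        = (((powersetCard (s+1) (univ : Finset (Fin n))) ×ˢ univ).filter
          fun p => (p.1 ∩ M).card = t+1 ∧ (p.2 ∈ M ∧ p.2 ∈ p.1)).card := by
      congr 1; apply Finset.filter_congr; rintro ⟨S, j⟩ _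
      simp only
      constructor
      · rintro ⟨hj, he, hjM⟩
        have h5 : S.erase j ∩ M = (S ∩ M).erase j := erase_inter S M j
        rw [h5, Finset.card_erase_of_mem (Finset.mem_inter.mpr ⟨hj, hjM⟩)] at he
        have hpos : 0 < (S ∩ M).card := Finset.card_pos.mpr ⟨j, Finset.mem_inter.mpr ⟨hj, hjM⟩⟩
        exact ⟨by omega, hjM, hj⟩
      · rintro ⟨he, hjM, hj⟩
        have h5 : S.erase j ∩ M = (S ∩ M).erase j := erase_inter S M j
        refine ⟨hj, ?_, hjM⟩
        rw [h5, Finset.card_erase_of_mem (Finset.mem_inter.mpr ⟨hj, hjM⟩), he]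
        omega
    rw [← e2, ← b2, e1]
    rw [(count_pairs s (fun S => (S ∩ M).card = t) (fun S j => j ∈ M ∧ j ∉ S) (M.card - t) ?_)]
    · rfl
    intro S _ hSM
    have : univ.filter (fun j => j ∈ M ∧ j ∉ S) = M \ S := by
      ext x; simp [Finset.mem_sdiff]
    rw [this]
    have := Finset.card_sdiff_add_card_inter M S
    rw [Finset.inter_comm] at this
    omega
  -- right piece
  have hP : (∑ u ∈ range (t+1), cnt n M u s) * (n - s)
      = (((powersetCard s (univ : Finset (Fin n))) ×ˢ univ).filter
          fun p => (p.1 ∩ M).card < t+1 ∧ p.2 ∉ p.1).card := by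
    rw [sum_cnt_eq, (count_pairs s (fun S => (S ∩ M).card < t+1) (fun S j => j ∉ S) (n - s) ?_)]
    intro S hS _
    rw [mem_powersetCard_univ] at hS
    have : univ.filter (fun j => j ∉ S) = Sᶜ := by ext x; simp
    rw [this, Finset.card_compl, hS, Fintype.card_fin]
  -- bijection for the main part
  have b1 := pair_bij n s (fun S j => (S ∩ M).card < t+1)
  have e3 : (((powersetCard s (univ : Finset (Fin n))) ×ˢ univ).filter
        fun p => p.2 ∉ p.1 ∧ (p.1 ∩ M).card < t+1).card
      = (((powersetCard s (univ : Finset (Fin n))) ×ˢ univ).filter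
        fun p => (p.1 ∩ M).card < t+1 ∧ p.2 ∉ p.1).card := by
    congr 1; apply Finset.filter_congr; intro x _; tauto
  -- split of the (s+1) side
  have split : (((powersetCard (s+1) (univ : Finset (Fin n))) ×ˢ univ).filter
        fun p => p.2 ∈ p.1 ∧ (p.1.erase p.2 ∩ M).card < t+1).card
      = (((powersetCard (s+1) (univ : Finset (Fin n))) ×ˢ univ).filter
          fun p => (p.1 ∩ M).card < t+1 ∧ p.2 ∈ p.1).card
        + (((powersetCard (s+1) (univ : Finset (Fin n))) ×ˢ univ).filter
          fun p => (p.1 ∩ M).card = t+1 ∧ (p.2 ∈ M ∧ p.2 ∈ p.1)).card := by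
    have e4 : (((powersetCard (s+1) (univ : Finset (Fin n))) ×ˢ univ).filter
          fun p => p.2 ∈ p.1 ∧ (p.1.erase p.2 ∩ M).card < t+1)
        = (((powersetCard (s+1) (univ : Finset (Fin n))) ×ˢ univ).filter
          fun p => ((p.1 ∩ M).card < t+1 ∧ p.2 ∈ p.1)
            ∨ ((p.1 ∩ M).card = t+1 ∧ (p.2 ∈ M ∧ p.2 ∈ p.1))) := by
      apply Finset.filter_congr; rintro ⟨S, j⟩ _
      simp only
      constructor
      · rintro ⟨hj, he⟩
        have hee : S.erase j ∩ M = (S ∩ M).erase j := erase_inter S M j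
        rw [hee] at he
        by_cases hjM : j ∈ M
        · rw [Finset.card_erase_of_mem (Finset.mem_inter.mpr ⟨hj, hjM⟩)] at he
          have hpos : 0 < (S ∩ M).card :=
            Finset.card_pos.mpr ⟨j, Finset.mem_inter.mpr ⟨hj, hjM⟩⟩
          by_cases hc : (S ∩ M).card < t+1
          · exact Or.inl ⟨hc, hj⟩
          · exact Or.inr ⟨by omega, hjM, hj⟩
        · rw [Finset.erase_eq_of_notMem (by simp [Finset.mem_inter, hjM])] at he
          exact Or.inl ⟨he, hj⟩
      · have hee : S.erase j ∩ M = (S ∩ M).erase j := erase_inter S M j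
        rintro (⟨hc, hj⟩ | ⟨hc, hjM, hj⟩)
        · refine ⟨hj, ?_⟩
          rw [hee]
          exact lt_of_le_of_lt (Finset.card_le_card (Finset.erase_subset _ _)) hc
        · refine ⟨hj, ?_⟩
          rw [hee, Finset.card_erase_of_mem (Finset.mem_inter.mpr ⟨hj, hjM⟩), hc]
          omega
    rw [e4, Finset.filter_or, Finset.card_union_of_disjoint]
    simp only [Finset.disjoint_left, mem_filter]
    rintro p ⟨-, h1, -⟩ ⟨-, h2, -⟩
    omega
  rw [hQ1, hQ2, hP, ← e3, b1, split]

noncomputable def ff (n : ℕ) (M : Finset (Fin n)) (t s : ℕ) : ℝ :=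
  (∑ u ∈ range (t+1), cnt n M u s : ℝ) / ((M.card - t : ℕ) * (n.choose s))

lemma tele (n : ℕ) (M : Finset (Fin n)) (t s : ℕ) (hs : s < n) (ht : t < M.card) :
    ff n M t s - ff n M t (s+1) = (cnt n M t s : ℝ) / ((n - s : ℕ) * (n.choose s)) := by
  have hstar := star n M t s hs ht
  have hch : n.choose (s+1) * (s+1) = n.choose s * (n - s) := Nat.choose_succ_right_eq n s
  have h1 : 0 < n.choose s := Nat.choose_pos (le_of_lt hs)
  have h2 : 0 < n.choose (s+1) := Nat.choose_pos hs
  have h3 : 0 < M.card - t := by omega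
  have h4 : 0 < n - s := by omega
  have c1 : ((n.choose s : ℝ)) ≠ 0 := by positivity
  have c2 : ((n.choose (s+1) : ℝ)) ≠ 0 := by positivity
  have c3 : (((M.card - t : ℕ) : ℝ)) ≠ 0 := by
    simp only [ne_eq, Nat.cast_eq_zero]; omega
  have c4 : (((n - s : ℕ) : ℝ)) ≠ 0 := by
    simp only [ne_eq, Nat.cast_eq_zero]; omega
  have hstarR : (∑ u ∈ range (t+1), (cnt n M u (s+1) : ℝ)) * ((s:ℝ)+1)
      + (cnt n M t s : ℝ) * ((M.card - t : ℕ) : ℝ)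
      = (∑ u ∈ range (t+1), (cnt n M u s : ℝ)) * (((n - s : ℕ)) : ℝ) := by
    have := congrArg (fun x : ℕ => (x : ℝ)) hstar
    push_cast at this ⊢
    convert this using 2 <;> push_cast <;> ring
  have hchR : ((n.choose (s+1) : ℝ)) * ((s:ℝ)+1) = ((n.choose s : ℝ)) * (((n - s : ℕ)) : ℝ) := by
    have := congrArg (fun x : ℕ => (x : ℝ)) hch
    push_cast at this ⊢
    convert this using 2 <;> push_cast <;> ring
  unfold ff
  rw [div_sub_div _ _ (by positivity) (by positivity), div_eq_div_iff (by positivity) (by positivity)]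
  push_cast
  linear_combination (-(((M.card - t : ℕ) : ℝ)) * (n.choose s) * (n.choose (s+1))) * hstarR
    + (((M.card - t : ℕ) : ℝ) * (n.choose s)
        * (∑ u ∈ range (t+1), (cnt n M u (s+1) : ℝ))) * hchR

lemma ff_zero (n : ℕ) (M : Finset (Fin n)) (t : ℕ) (ht : t < M.card) :
    ff n M t 0 = 1 / ((M.card - t : ℕ) : ℝ) := by
  unfold ff
  have h1 : ∀ u, cnt n M u 0 = if u = 0 then 1 else 0 := by
    intro u
    unfold cnt
    rw [Finset.powersetCard_zero]
    rw [Finset.filter_singleton]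
    by_cases h : u = 0
    · simp [h]
    · simp only [Finset.empty_inter, Finset.card_empty]
      rw [if_neg (by omega), if_neg h]
      simp
  have h2 : ∑ u ∈ range (t+1), cnt n M u 0 = 1 := by
    rw [Finset.sum_congr rfl (fun u _ => h1 u)]
    rw [Finset.sum_ite_eq' (range (t+1)) 0 (fun _ => 1)]
    simp
  rw [← Nat.cast_sum, h2, Nat.choose_zero_right]
  simp

lemma ff_n (n : ℕ) (M : Finset (Fin n)) (t : ℕ) (ht : t < M.card) :
    ff n M t n = 0 := by
  unfold ff
  have h1 : ∀ u, u < t + 1 → cnt n M u n = 0 := by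
    intro u hu
    unfold cnt
    have : powersetCard n (univ : Finset (Fin n)) = {univ} := by
      have := Finset.powersetCard_self (univ : Finset (Fin n))
      rwa [Finset.card_univ, Fintype.card_fin] at this
    rw [this, Finset.filter_singleton]
    rw [Finset.univ_inter, if_neg (by omega)]
    rfl
  have h2 : ∑ u ∈ range (t+1), cnt n M u n = 0 := by
    apply Finset.sum_eq_zero
    intro u hu
    exact h1 u (mem_range.mp hu)
  rw [← Nat.cast_sum, h2]
  simp

lemma sum_tele (n : ℕ) (M : Finset (Fin n)) (t : ℕ) (ht : t < M.card) (hmn : M.card ≤ n) :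
    ∑ s ∈ range n, (cnt n M t s : ℝ) / ((n - s : ℕ) * (n.choose s))
      = 1 / ((M.card - t : ℕ) : ℝ) := by
  have : ∀ s ∈ range n, (cnt n M t s : ℝ) / ((n - s : ℕ) * (n.choose s))
      = ff n M t s - ff n M t (s+1) := by
    intro s hs
    exact (tele n M t s (mem_range.mp hs) ht).symm
  rw [Finset.sum_congr rfl this, Finset.sum_range_sub' (ff n M t), ff_zero n M t ht,
    ff_n n M t ht, sub_zero]

lemma core_sum (n : ℕ) (M : Finset (Fin n)) (d : ℕ) (hd : 0 < d) (hdm : d ≤ M.card)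
    (hmn : M.card ≤ n) :
    (d : ℝ) / (M.card : ℝ)
      ≤ ∑ s ∈ range n, (((powersetCard s (univ : Finset (Fin n))).filter
          fun S => (S ∩ M).card < d).card : ℝ) / ((n - s : ℕ) * (n.choose s)) := by
  have swap : ∑ s ∈ range n, (((powersetCard s (univ : Finset (Fin n))).filter
          fun S => (S ∩ M).card < d).card : ℝ) / ((n - s : ℕ) * (n.choose s))
      = ∑ t ∈ range d, ∑ s ∈ range n, (cnt n M t s : ℝ) / ((n - s : ℕ) * (n.choose s)) := by
    rw [Finset.sum_comm]
    refine Finset.sum_congr rfl fun s _ => ?_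
    rw [← Finset.sum_div]
    congr 1
    rw [← Nat.cast_sum]
    rw [sum_cnt_eq n M d s]
  rw [swap]
  have : ∀ t ∈ range d, ∑ s ∈ range n, (cnt n M t s : ℝ) / ((n - s : ℕ) * (n.choose s))
      = 1 / ((M.card - t : ℕ) : ℝ) := fun t ht =>
    sum_tele n M t (lt_of_lt_of_le (mem_range.mp ht) hdm) hmn
  rw [Finset.sum_congr rfl this]
  have hbound : ∀ t ∈ range d, (1 : ℝ) / (M.card : ℝ) ≤ 1 / ((M.card - t : ℕ) : ℝ) := by
    intro t ht
    have h1 : 0 < M.card - t := by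
      have := mem_range.mp ht; omega
    apply one_div_le_one_div_of_le
    · exact_mod_cast h1
    · exact_mod_cast Nat.sub_le _ _
  calc (d : ℝ) / (M.card : ℝ) = ∑ _t ∈ range d, (1:ℝ) / (M.card : ℝ) := by
        rw [Finset.sum_const, Finset.card_range]; ring
    _ ≤ _ := Finset.sum_le_sum hbound

lemma harm_eq_Icc (n : ℕ) : harm n = ∑ s ∈ Icc 1 n, (1 : ℝ) / (s : ℝ) := by
  induction n with
  | zero => simp [harm]
  | succ n ih =>
    rw [harm, Finset.sum_range_succ, ← harm, ih,
      Finset.sum_Icc_succ_top (by omega : 1 ≤ n+1) (fun s : ℕ => (1:ℝ)/(s:ℝ))]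
    push_cast
    ring

lemma harm_succ_sub (n : ℕ) (hn : 0 < n) : harm n = harm (n-1) + 1/(n:ℝ) := by
  obtain ⟨m, rfl⟩ := Nat.exists_eq_add_of_lt hn
  simp only [Nat.zero_add, Nat.add_sub_cancel]
  rw [harm, Finset.sum_range_succ, ← harm]
  push_cast
  ring

lemma sum_inv_sub (n : ℕ) : ∑ s ∈ Icc 1 (n-1), (n:ℝ)/(((n - s : ℕ)):ℝ)
    = (n:ℝ) * harm (n-1) := by
  have h1 : ∑ s ∈ Icc 1 (n-1), (1:ℝ)/(((n - s : ℕ)):ℝ) = ∑ s ∈ Icc 1 (n-1), (1:ℝ)/(s:ℝ) := by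
    apply Finset.sum_nbij' (fun s => n - s) (fun s => n - s)
    · intro a ha; simp only [mem_Icc] at ha ⊢; omega
    · intro a ha; simp only [mem_Icc] at ha ⊢; omega
    · intro a ha; simp only [mem_Icc] at ha; omega
    · intro a ha; simp only [mem_Icc] at ha; omega
    · intro a ha; rfl
  rw [harm_eq_Icc, ← h1, Finset.mul_sum, Finset.sum_congr rfl]
  intro s _
  rw [mul_one_div]

lemma gamma_zero (n d : ℕ) (M : Finset (Fin n)) (hd : 0 < d) :
    ((powersetCard 0 (univ : Finset (Fin n))).filter fun S => (S ∩ M).card < d).card = 1 := by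
  rw [Finset.powersetCard_zero, Finset.filter_singleton, if_pos (by simp [hd])]
  rfl


lemma etime_ge {F : Type*} [Field F] {k n : ℕ} (G : Matrix (Fin k) (Fin n) F)
    (V : Submodule F (Fin k → F)) (M : Finset (Fin n)) (d : ℕ)
    (hd : 0 < d) (hdm : d ≤ M.card)
    (hα : ∀ S : Finset (Fin n), V ≤ colSpan F G S → d ≤ (S ∩ M).card) :
    (n : ℝ) * d / M.card ≤ Etime F G V := by
  classical
  have hmn : M.card ≤ n := by
    have := Finset.card_le_card (Finset.subset_univ M)
    rwa [Finset.card_univ, Fintype.card_fin] at this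
  have hn : 0 < n := lt_of_lt_of_le (lt_of_lt_of_le hd hdm) hmn
  set γ : ℕ → ℕ := fun s => ((powersetCard s (univ : Finset (Fin n))).filter
      fun S => (S ∩ M).card < d).card with hγ
  -- α s ≤ C(n,s) - γ s
  have hβ : ∀ s, (alphaCount F G V s : ℝ) ≤ (n.choose s : ℝ) - γ s := by
    intro s
    have h1 : alphaCount F G V s
        = ((univ : Finset (Finset (Fin n))).filter
            fun S => S.card = s ∧ V ≤ colSpan F G S).card := by
      rw [alphaCount, Nat.card_eq_fintype_card, Fintype.card_subtype]
    have h2 : alphaCount F G V s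
        ≤ ((powersetCard s (univ : Finset (Fin n))).filter fun S => d ≤ (S ∩ M).card).card := by
      rw [h1]
      apply Finset.card_le_card
      intro S hS
      rw [mem_filter] at hS
      rw [mem_filter, mem_powersetCard_univ]
      exact ⟨hS.2.1, hα S hS.2.2⟩
    have h3 : ((powersetCard s (univ : Finset (Fin n))).filter
          fun S => d ≤ (S ∩ M).card).card + γ s = n.choose s := by
      have h4 : γ s = ((powersetCard s (univ : Finset (Fin n))).filter
          fun S => ¬ (d ≤ (S ∩ M).card)).card := by
        simp only [hγ, not_le]
      rw [h4, Finset.card_filter_add_card_filter_not, Finset.card_powersetCard,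
        Finset.card_univ, Fintype.card_fin]
    have := h2
    have h5 : (alphaCount F G V s : ℝ) ≤ (((powersetCard s (univ : Finset (Fin n))).filter
        fun S => d ≤ (S ∩ M).card).card : ℝ) := by exact_mod_cast h2
    have h6 : (((powersetCard s (univ : Finset (Fin n))).filter
        fun S => d ≤ (S ∩ M).card).card : ℝ) = (n.choose s : ℝ) - γ s := by
      have := congrArg (fun x : ℕ => (x : ℝ)) h3
      push_cast at this
      linarith
    linarith
  -- lower bound Etime by the explicit sum
  have step1 : (n : ℝ) * harm n
        - ∑ s ∈ Icc 1 (n-1), ((n.choose s : ℝ) - γ s) / ((n-1).choose s : ℝ)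
      ≤ Etime F G V := by
    unfold Etime
    apply sub_le_sub_left
    apply Finset.sum_le_sum
    intro s hs
    apply div_le_div_of_nonneg_right (hβ s)
    positivity
  refine le_trans ?_ step1
  -- rewrite the sum
  have key : ∀ s ∈ Icc 1 (n-1), ((n.choose s : ℝ) - γ s) / ((n-1).choose s : ℝ)
      = (n:ℝ)/(((n - s : ℕ)):ℝ) - (n:ℝ) * (γ s : ℝ) / ((((n - s : ℕ)):ℝ) * (n.choose s : ℝ)) := by
    intro s hs
    rw [mem_Icc] at hs
    obtain ⟨hs1, hs2⟩ := hs
    have hsn : s < n := by omega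
    have hnc : (n-1).choose s * n = n.choose s * (n - s) := by
      have := Nat.choose_mul_succ_eq (n-1) s
      have hn1 : n - 1 + 1 = n := by omega
      rw [hn1] at this
      exact this
    have p1 : (0:ℝ) < ((n-1).choose s : ℝ) := by
      exact_mod_cast Nat.choose_pos hs2
    have p2 : (0:ℝ) < (n.choose s : ℝ) := by
      exact_mod_cast Nat.choose_pos (le_of_lt hsn)
    have p3 : (0:ℝ) < (((n - s : ℕ)):ℝ) := by
      have : 0 < n - s := by omega
      exact_mod_cast this
    have hncR : ((n-1).choose s : ℝ) * (n:ℝ) = (n.choose s : ℝ) * (((n - s:ℕ)):ℝ) := by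
      exact_mod_cast congrArg (fun x : ℕ => (x : ℝ)) hnc
    rw [div_sub_div _ _ (ne_of_gt p3) (by positivity), div_eq_div_iff (ne_of_gt p1) (by positivity)]
    linear_combination (-(((n.choose s : ℝ) - (γ s : ℝ))) * (((n - s : ℕ) : ℝ))) * hncR
  rw [Finset.sum_congr rfl key, Finset.sum_sub_distrib, sum_inv_sub]
  -- now: n*d/m ≤ n*harm n - (n*harm (n-1) - Σ_{Icc} n γ/((n-s)C))
  have hh : (n:ℝ) * harm n - ((n:ℝ) * harm (n-1)
        - ∑ s ∈ Icc 1 (n-1), (n:ℝ) * (γ s : ℝ) / ((((n - s : ℕ)):ℝ) * (n.choose s : ℝ)))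
      = (n:ℝ) * ∑ s ∈ range n, (γ s : ℝ) / ((((n - s : ℕ)):ℝ) * (n.choose s : ℝ)) := by
    have hr : range n = insert 0 (Icc 1 (n-1)) := by
      ext x
      simp only [mem_range, mem_insert, mem_Icc]
      omega
    rw [hr, Finset.sum_insert (by simp)]
    have hγ0 : (γ 0 : ℝ) = 1 := by
      rw [hγ]; exact_mod_cast gamma_zero n d M hd
    rw [hγ0, harm_succ_sub n hn]
    rw [Nat.sub_zero, Nat.choose_zero_right]
    push_cast
    have hne : (n:ℝ) ≠ 0 := by positivity
    rw [mul_add, mul_add, Finset.mul_sum]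
    rw [Finset.sum_congr rfl (fun s _ => (mul_div_assoc (n:ℝ) _ _).symm)]
    simp only [mul_one, mul_one_div, div_self hne]
    ring
  rw [hh]
  have := core_sum n M d hd hdm hmn
  calc (n : ℝ) * d / M.card = (n:ℝ) * ((d:ℝ) / M.card) := by ring
    _ ≤ _ := by
        apply mul_le_mul_of_nonneg_left _ (by positivity)
        exact this

lemma span_filter_card {F : Type*} [Field F] {k n : ℕ} (G : Matrix (Fin k) (Fin n) F)
    (V W : Submodule F (Fin k → F)) (d : ℕ) (M : Finset (Fin n))
    (hM : ∀ j, j ∈ M ↔ (fun i => G i j) ∉ W)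
    (p : (Fin k → F) →ₗ[F] (Fin k → F)) (hpW : W ≤ LinearMap.ker p)
    (v : Fin d → (Fin k → F)) (hv : LinearIndependent F v)
    (hvV : ∀ i, v i ∈ V) (hpv : ∀ i, p (v i) = v i)
    (S : Finset (Fin n)) (hVS : V ≤ colSpan F G S) :
    d ≤ (S ∩ M).card := by
  classical
  set T := S ∩ M with hT
  set W' := Submodule.span F ((T.image (fun j => p (fun i => G i j)) : Finset (Fin k → F)) :
      Set (Fin k → F)) with hW'
  have claim1 : ∀ i, v i ∈ W' := by
    intro i
    have h1 : p (v i) ∈ Submodule.map p (colSpan F G S) :=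
      Submodule.mem_map_of_mem (hVS (hvV i))
    rw [hpv i] at h1
    refine Submodule.map_le_iff_le_comap.mpr ?_ h1
    rw [colSpan, Submodule.span_le]
    rintro x ⟨j, hj, rfl⟩
    simp only [SetLike.mem_coe, Submodule.mem_comap]
    by_cases hw : (fun i => G i j) ∈ W
    · have hz : p (fun i => G i j) = 0 := hpW hw
      rw [hz]
      exact Submodule.zero_mem _
    · apply Submodule.subset_span
      rw [Finset.coe_image]
      refine Set.mem_image_of_mem _ ?_
      rw [Finset.mem_coe, hT, Finset.mem_inter, hM]
      exact ⟨hj, hw⟩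
  have hfd : FiniteDimensional F W' := FiniteDimensional.span_finset F _
  have hvW' : LinearIndependent F (fun i => (⟨v i, claim1 i⟩ : W')) := by
    apply LinearIndependent.of_comp W'.subtype
    convert hv
    rfl
  have h2 : d ≤ Module.finrank F W' := by
    have := hvW'.fintype_card_le_finrank
    simpa using this
  have h3 : Module.finrank F W' ≤ (T.image (fun j => p (fun i => G i j))).card :=
    finrank_span_finset_le_card _
  have h4 : (T.image (fun j => p (fun i => G i j))).card ≤ T.card := Finset.card_image_le
  omega


/-- coordinate projection onto a set of indices -/
def projIdx (F : Type*) [Field F] (k : ℕ) (P : Fin k → Prop) [DecidablePred P] :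
    (Fin k → F) →ₗ[F] (Fin k → F) where
  toFun v := fun i => if P i then v i else 0
  map_add' := by
    intro x y; funext i; by_cases h : P i <;> simp [h]
  map_smul' := by
    intro c x; funext i; by_cases h : P i <;> simp [h]

lemma projIdx_single (F : Type*) [Field F] (k : ℕ) (P : Fin k → Prop) [DecidablePred P]
    (i : Fin k) (hi : P i) : projIdx F k P (Pi.single i 1) = Pi.single i (1:F) := by
  funext j
  simp only [projIdx, LinearMap.coe_mk, AddHom.coe_mk]
  by_cases h : P j
  · simp [h]
  · rw [if_neg h, Pi.single_apply, if_neg]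
    intro hji
    exact h (hji ▸ hi)

lemma projIdx_single_zero (F : Type*) [Field F] (k : ℕ) (P : Fin k → Prop) [DecidablePred P]
    (i : Fin k) (hi : ¬ P i) : projIdx F k P (Pi.single i 1) = 0 := by
  funext j
  simp only [projIdx, LinearMap.coe_mk, AddHom.coe_mk]
  by_cases h : P j
  · rw [if_pos h, Pi.single_apply, if_neg, Pi.zero_apply]
    intro hji
    exact hi (hji ▸ h)
  · simp [h]

lemma single_li {F : Type*} [Field F] {k d : ℕ} (e : Fin d → Fin k) (he : Function.Injective e) :
    LinearIndependent F (fun i : Fin d => (Pi.single (e i) 1 : Fin k → F)) := by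
  have h := (Pi.basisFun F (Fin k)).linearIndependent.comp e he
  convert h using 1
  funext i
  simp [Pi.basisFun_apply]

lemma side_bound {F : Type*} [Field F] {k n : ℕ} (G : Matrix (Fin k) (Fin n) F)
    (V W : Submodule F (Fin k → F)) (d : ℕ) (hd : 0 < d)
    (p : (Fin k → F) →ₗ[F] (Fin k → F)) (hpW : W ≤ LinearMap.ker p)
    (v : Fin d → (Fin k → F)) (hv : LinearIndependent F v)
    (hvV : ∀ i, v i ∈ V) (hpv : ∀ i, p (v i) = v i)
    (htop : colSpan F G (univ : Finset (Fin n)) = ⊤) :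
    (d : ℝ) / Etime F G V ≤ ((n : ℝ) - (Ncount F G W : ℝ)) / (n : ℝ) := by
  classical
  set M := (univ : Finset (Fin n)).filter (fun j => (fun i => G i j) ∉ W) with hMdef
  have hM : ∀ j, j ∈ M ↔ (fun i => G i j) ∉ W := by
    intro j; simp [hMdef]
  have hα : ∀ S : Finset (Fin n), V ≤ colSpan F G S → d ≤ (S ∩ M).card :=
    fun S h => span_filter_card G V W d M hM p hpW v hv hvV hpv S h
  have hdm : d ≤ M.card := by
    have := hα univ (htop ▸ le_top)
    rwa [Finset.univ_inter] at this
  have hmn : M.card ≤ n := by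
    have := Finset.card_le_card (Finset.subset_univ M)
    rwa [Finset.card_univ, Fintype.card_fin] at this
  have hn : 0 < n := lt_of_lt_of_le (lt_of_lt_of_le hd hdm) hmn
  have hE := etime_ge G V M d hd hdm hα
  have hNc : Ncount F G W
      = ((univ : Finset (Fin n)).filter (fun j => (fun i => G i j) ∈ W)).card := by
    rw [Ncount, Nat.card_eq_fintype_card, Fintype.card_subtype]
  have hNM : Ncount F G W + M.card = n := by
    rw [hNc, hMdef]
    have h0 := Finset.card_filter_add_card_filter_not
      (s := (univ : Finset (Fin n))) (p := fun j => (fun i => G i j) ∈ W)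
    rw [Finset.card_univ, Fintype.card_fin] at h0
    convert h0 using 3
  have hlb : (0:ℝ) < (n : ℝ) * d / M.card := by
    have h1 : (0:ℝ) < (M.card : ℝ) := by exact_mod_cast lt_of_lt_of_le hd hdm
    positivity
  have hEpos : 0 < Etime F G V := lt_of_lt_of_le hlb hE
  have step : (d : ℝ) / Etime F G V ≤ (d : ℝ) / ((n : ℝ) * d / M.card) := by
    exact div_le_div_of_nonneg_left (by positivity) hlb hE
  refine le_trans step ?_
  have hMeq : (M.card : ℝ) = (n : ℝ) - (Ncount F G W : ℝ) := by
    have := congrArg (fun x : ℕ => (x : ℝ)) hNM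
    push_cast at this
    linarith
  have hdne : (d : ℝ) ≠ 0 := by positivity
  have hnne : (n : ℝ) ≠ 0 := by positivity
  have hmne : (M.card : ℝ) ≠ 0 := by
    have h2 : (0:ℝ) < (M.card : ℝ) := by exact_mod_cast lt_of_lt_of_le hd hdm
    positivity
  have heq : (d : ℝ) / ((n : ℝ) * d / M.card) = (M.card : ℝ) / n := by
    field_simp
  rw [← hMeq, heq]


/-- The nonlinear geometric bound:
`s₁/E₁(G) + s₂/E₂(G) ≤ 2 − (N(F₁) + N(F₂))/n`. -/
theorem stmt9 (q k n s1 s2 : ℕ) (hq : IsPrimePow q)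
    (F : Type*) [Field F] [Fintype F] (hF : Fintype.card F = q)
    (G : Matrix (Fin k) (Fin n) F) (hrank : G.rank = k)
    (hs1 : 1 ≤ s1) (hs2 : 1 ≤ s2) (hk : s1 + s2 = k) :
    (s1 : ℝ) / Etime F G (file1 F k s1) + (s2 : ℝ) / Etime F G (file2 F k s1) ≤
      2 - ((Ncount F G (file1 F k s1) + Ncount F G (file2 F k s1) : ℕ) : ℝ) / (n : ℝ) := by
  classical
  have hkn : k ≤ n := by
    have h1 := Matrix.rank_le_card_width G
    rw [hrank, Fintype.card_fin] at h1
    exact h1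
  have hs1k : s1 ≤ k := by omega
  have hn : 0 < n := by omega
  -- full column span
  have htop : colSpan F G (univ : Finset (Fin n)) = ⊤ := by
    apply Submodule.eq_top_of_finrank_eq
    rw [colSpan, Finset.coe_univ, Set.image_univ]
    have h2 : Module.finrank F (Submodule.span F (Set.range fun j => fun i => G i j)) = k := by
      have h3 := (Matrix.rank_eq_finrank_span_cols G).symm
      calc Module.finrank F (Submodule.span F (Set.range fun j => fun i => G i j))
          = Module.finrank F (Submodule.span F (Set.range G.transpose)) := rfl
        _ = G.rank := h3
        _ = k := hrank
    rw [h2, Module.finrank_fin_fun]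
  -- side 1
  have hb1 : (s1 : ℝ) / Etime F G (file1 F k s1)
      ≤ ((n : ℝ) - (Ncount F G (file2 F k s1) : ℝ)) / (n : ℝ) := by
    apply side_bound G (file1 F k s1) (file2 F k s1) s1 hs1
      (projIdx F k (fun i => (i : ℕ) < s1)) ?_
      (fun i => Pi.single (Fin.castLE hs1k i) 1)
      (single_li _ (Fin.castLE_injective hs1k)) ?_ ?_ htop
    · rw [file2, Submodule.span_le]
      rintro x ⟨i, hi, rfl⟩
      simp only [SetLike.mem_coe, LinearMap.mem_ker]
      exact projIdx_single_zero F k _ i (by omega)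
    · intro i
      exact Submodule.subset_span ⟨Fin.castLE hs1k i,
        (by rw [Fin.coe_castLE]; exact i.2), rfl⟩
    · intro i
      exact projIdx_single F k _ (Fin.castLE hs1k i) (by rw [Fin.coe_castLE]; exact i.2)
  -- side 2
  have hb2 : (s2 : ℝ) / Etime F G (file2 F k s1)
      ≤ ((n : ℝ) - (Ncount F G (file1 F k s1) : ℝ)) / (n : ℝ) := by
    apply side_bound G (file2 F k s1) (file1 F k s1) s2 hs2
      (projIdx F k (fun i => s1 ≤ (i : ℕ))) ?_
      (fun i => Pi.single (⟨s1 + i.1, by omega⟩ : Fin k) 1)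
      (single_li _ ?_) ?_ ?_ htop
    · rw [file1, Submodule.span_le]
      rintro x ⟨i, hi, rfl⟩
      simp only [SetLike.mem_coe, LinearMap.mem_ker]
      exact projIdx_single_zero F k _ i (by omega)
    · intro a b hab
      have := congrArg Fin.val hab
      simp only at this
      exact Fin.ext (by omega)
    · intro i
      exact Submodule.subset_span ⟨⟨s1 + i.1, by omega⟩, by simp, rfl⟩
    · intro i
      exact projIdx_single F k _ _ (by simp)
  have hsum := add_le_add hb1 hb2
  refine le_trans hsum (le_of_eq ?_)
  have hnne : (n : ℝ) ≠ 0 := by positivity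
  push_cast
  field_simp
  ring
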